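/- There exists an index j ∈ {1,…,κ−1} such that γ_{j+1} − γ_j > 2δ, or else γ_1 + Γ − γ_κ > 2δ. In other words, among the sorted common residues on the circle modulo Γ there are two cyclically consecutive residues whose clockwise gap exceeds 2δ. -/

import Mathlib

/-- `rmod Γ x` is the representative of `x` modulo `Γ` in `[0, Γ)` (for `Γ > 0`). -/
noncomputable def rmod (Γ x : ℝ) : ℝ := x - Γ * (⌊x / Γ⌋ : ℝ)

lemma rmod_eq_fract {Γ : ℝ} (hΓ : 0 < Γ) (x : ℝ) :
    rmod Γ x = Γ * Int.fract (x / Γ) := by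
  unfold rmod Int.fract
  field_simp

lemma rmod_nonneg {Γ : ℝ} (hΓ : 0 < Γ) (x : ℝ) : 0 ≤ rmod Γ x := by
  rw [rmod_eq_fract hΓ]
  exact mul_nonneg hΓ.le (Int.fract_nonneg _)

lemma rmod_lt {Γ : ℝ} (hΓ : 0 < Γ) (x : ℝ) : rmod Γ x < Γ := by
  rw [rmod_eq_fract hΓ]
  nlinarith [Int.fract_lt_one (x / Γ)]

lemma rmod_cases {Γ : ℝ} (hΓ : 0 < Γ) {x : ℝ} (h1 : -Γ < x) (h2 : x < 2 * Γ) :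
    rmod Γ x = x + Γ ∨ rmod Γ x = x ∨ rmod Γ x = x - Γ := by
  have hf1 : (-1 : ℤ) ≤ ⌊x / Γ⌋ := by
    apply Int.le_floor.2
    push_cast
    rw [le_div_iff₀ hΓ]
    linarith
  have hf2 : ⌊x / Γ⌋ < 2 := by
    have h3 : (⌊x / Γ⌋ : ℝ) ≤ x / Γ := Int.floor_le _
    have hx : x / Γ < 2 := by rw [div_lt_iff₀ hΓ]; linarith
    exact_mod_cast lt_of_le_of_lt h3 hx
  interval_cases h : ⌊x / Γ⌋
  · left; unfold rmod; rw [h]; push_cast; ring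
  · right; left; unfold rmod; rw [h]; push_cast; ring
  · right; right; unfold rmod; rw [h]; push_cast; ring

lemma straddle {κ : ℕ} {γ : Fin κ → ℝ} (hmono : StrictMono γ) {p q : ℝ}
    (hpq : p ≤ q)
    (hall : ∀ j, γ j < p ∨ q < γ j)
    (hp : ∃ j, γ j < p) (hq : ∃ j, q < γ j) :
    ∃ j k : Fin κ, (k : ℕ) = (j : ℕ) + 1 ∧ q - p < γ k - γ j := by
  classical
  obtain ⟨j0, hj0⟩ := hp
  obtain ⟨k0, hk0⟩ := hq
  let S : Finset (Fin κ) := Finset.univ.filter (fun j => γ j < p)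
  have hS : S.Nonempty := ⟨j0, by simp [S, hj0]⟩
  set j := S.max' hS with hj
  have hjp : γ j < p := by have := S.max'_mem hS; simpa [S] using this
  have hjk0 : (j : ℕ) < (k0 : ℕ) := by
    by_contra h
    have hle : k0 ≤ j := by
      rw [Fin.le_def]; omega
    have := hmono.monotone hle
    linarith
  have hlt : (j : ℕ) + 1 < κ := by have := k0.isLt; omega
  refine ⟨j, ⟨(j : ℕ) + 1, hlt⟩, rfl, ?_⟩
  have hk : q < γ ⟨(j : ℕ) + 1, hlt⟩ := by
    rcases hall ⟨(j : ℕ) + 1, hlt⟩ with h | h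
    · exfalso
      have hmem : (⟨(j : ℕ) + 1, hlt⟩ : Fin κ) ∈ S := by simp [S, h]
      have := S.le_max' _ hmem
      simp [Fin.le_def, ← hj] at this
    · exact h
  linarith

lemma telescope (f : ℕ → ℝ) (B : ℝ) (m : ℕ) (h : ∀ k < m, f (k + 1) - f k ≤ B) :
    f m - f 0 ≤ m * B := by
  induction m with
  | zero => simp
  | succ n ih =>
    have h1 := h n (by omega)
    have h2 := ih (fun k hk => h k (by omega))
    push_cast
    nlinarith

/-- Among the sorted common residues `γ_1 < ⋯ < γ_κ` on the circle modulo
`Γ = 4Nδ`, there exist two cyclically consecutive residues whose clockwise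
gap exceeds `2δ`. -/
theorem exists_gap_exceeding_two_delta
    (N L : ℕ) (hN : 1 ≤ N) (hL : 1 ≤ L)
    (δ : ℝ) (hδ : 0 < δ) (Γ : ℝ) (hΓ : Γ = 4 * N * δ)
    (rc : Fin N → ℝ) (hrc : ∀ i, 0 ≤ rc i ∧ rc i < Γ)
    (Δ : Fin N → Fin L → ℝ) (hΔ : ∀ i l, |Δ i l| < δ)
    (tilde : Fin N → Fin L → ℝ)
    (htilde : ∀ i l, tilde i l = rmod Γ (rc i + Δ i l))
    (hinj : Function.Injective (fun p : Fin N × Fin L => tilde p.1 p.2))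
    (γ : Fin (N * L) → ℝ) (hγmono : StrictMono γ)
    (hγrange : ∀ j, ∃ i l, γ j = tilde i l) :
    (∃ j k : Fin (N * L), (k : ℕ) = (j : ℕ) + 1 ∧ γ k - γ j > 2 * δ) ∨
    (∃ j k : Fin (N * L), (j : ℕ) = 0 ∧ (k : ℕ) = N * L - 1 ∧
      γ j + Γ - γ k > 2 * δ) := by
  classical
  have hκ : 0 < N * L := Nat.mul_pos hN hL
  have hN1 : (1 : ℝ) ≤ (N : ℝ) := by exact_mod_cast hN
  have hΓ4 : 4 * δ ≤ Γ := by rw [hΓ]; nlinarith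
  have hΓpos : 0 < Γ := by linarith
  have hγmem : ∀ j, 0 ≤ γ j ∧ γ j < Γ := by
    intro j; obtain ⟨i, l, h⟩ := hγrange j
    rw [h, htilde]; exact ⟨rmod_nonneg hΓpos _, rmod_lt hΓpos _⟩
  -- each γ j is within δ of some center, modulo Γ
  have hnear : ∀ j : Fin (N * L), ∃ i : Fin N,
      |γ j - rc i| < δ ∨ |γ j - (rc i - Γ)| < δ ∨ |γ j - (rc i + Γ)| < δ := by
    intro j
    obtain ⟨i, l, h⟩ := hγrange j
    refine ⟨i, ?_⟩
    have habs := abs_lt.1 (hΔ i l)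
    have h0 := (hrc i).1
    have h1' := (hrc i).2
    have h1 : -Γ < rc i + Δ i l := by linarith
    have h2 : rc i + Δ i l < 2 * Γ := by linarith
    rw [h, htilde i l]
    rcases rmod_cases hΓpos h1 h2 with h' | h' | h'
    · right; right; rw [h', abs_lt]; constructor <;> linarith
    · left; rw [h', abs_lt]; constructor <;> linarith
    · right; left; rw [h', abs_lt]; constructor <;> linarith
  -- pigeonhole on the centers
  have hpig : (∃ cl cr : ℝ, 0 ≤ cl ∧ cr < Γ ∧ 4 * δ ≤ cr - cl ∧
        ∀ i, rc i ≤ cl ∨ cr ≤ rc i) ∨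
      (∃ a b : ℝ, 0 ≤ a ∧ b < Γ ∧ b - a ≤ Γ - 4 * δ ∧
        ∀ i, a ≤ rc i ∧ rc i ≤ b) := by
    set c : Fin N → ℝ := rc ∘ Tuple.sort rc with hc
    have hcmono : Monotone c := Tuple.monotone_sort rc
    have hcmem : ∀ k, 0 ≤ c k ∧ c k < Γ := fun k => hrc _
    have hcrange : ∀ i, ∃ k, rc i = c k := by
      intro i
      exact ⟨(Tuple.sort rc).symm i, by simp [hc]⟩
    by_cases hA : ∃ m : ℕ, ∃ hm : m + 1 < N,
        4 * δ ≤ c ⟨m + 1, hm⟩ - c ⟨m, Nat.lt_of_succ_lt hm⟩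
    · obtain ⟨m, hm, hgap⟩ := hA
      left
      refine ⟨c ⟨m, Nat.lt_of_succ_lt hm⟩, c ⟨m + 1, hm⟩,
        (hcmem _).1, (hcmem _).2, hgap, ?_⟩
      intro i
      obtain ⟨k, hk⟩ := hcrange i
      rcases le_or_gt (k : ℕ) m with h | h
      · left; rw [hk]; exact hcmono (by rw [Fin.le_def]; simpa using h)
      · right; rw [hk]; exact hcmono (by rw [Fin.le_def]; simp; omega)
    · right
      push_neg at hA
      have hlN : N - 1 < N := by omega
      have h0N : 0 < N := hN
      have gmk : ∀ (x : ℕ) (hx : x ≤ N - 1),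
          c ⟨min x (N - 1), lt_of_le_of_lt (min_le_right _ _) hlN⟩ = c ⟨x, by omega⟩ := by
        intro x hx
        congr 1
        exact Fin.ext (by simp [Nat.min_eq_left hx])
      set g : ℕ → ℝ := fun k => c ⟨min k (N - 1), lt_of_le_of_lt (min_le_right _ _) hlN⟩
        with hg
      have htel : g (N - 1) - g 0 ≤ (N - 1 : ℕ) * (4 * δ) := by
        apply telescope
        intro k hk
        have e1 : g (k + 1) = c ⟨k + 1, by omega⟩ := gmk (k + 1) (by omega)
        have e2 : g k = c ⟨k, by omega⟩ := gmk k (by omega)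
        rw [e1, e2]
        exact le_of_lt (hA k (by omega))
      have e3 : g (N - 1) = c ⟨N - 1, hlN⟩ := gmk (N - 1) le_rfl
      have e4 : g 0 = c ⟨0, h0N⟩ := gmk 0 (by omega)
      rw [e3, e4] at htel
      have hcast : ((N - 1 : ℕ) : ℝ) * (4 * δ) = Γ - 4 * δ := by
        rw [Nat.cast_sub hN, hΓ]; push_cast; ring
      refine ⟨c ⟨0, h0N⟩, c ⟨N - 1, hlN⟩, (hcmem _).1, (hcmem _).2, by linarith, ?_⟩
      intro i
      obtain ⟨k, hk⟩ := hcrange i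
      constructor
      · rw [hk]; exact hcmono (by rw [Fin.le_def]; simp)
      · rw [hk]; exact hcmono (by rw [Fin.le_def]; simp; omega)
  -- the two main cases
  rcases hpig with ⟨cl, cr, hcl0, hcrΓ, hgap, hcenter⟩ | ⟨a, b, ha0, hbΓ, hB, hcenter⟩
  · -- Case A: a big interior gap between adjacent centers
    have hclass : ∀ j, γ j < cl + δ ∨ cr - δ < γ j := by
      intro j
      obtain ⟨i, hi⟩ := hnear j
      have h0 := (hrc i).1
      have h1 := (hrc i).2
      rcases hcenter i with hd | hd
      · rcases hi with h | h | h <;> rw [abs_lt] at h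
        · left; linarith
        · left; linarith
        · right; linarith
      · rcases hi with h | h | h <;> rw [abs_lt] at h
        · right; linarith
        · left; linarith
        · right; linarith
    by_cases hPex : ∃ j, γ j < cl + δ
    · by_cases hQex : ∃ j, cr - δ < γ j
      · obtain ⟨j, k, hk, hgt⟩ := straddle hγmono (by linarith) hclass hPex hQex
        exact Or.inl ⟨j, k, hk, by linarith⟩
      · push_neg at hQex
        right
        refine ⟨⟨0, hκ⟩, ⟨N * L - 1, by omega⟩, rfl, rfl, ?_⟩
        have hall : γ ⟨N * L - 1, by omega⟩ < cl + δ :=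
          (hclass _).resolve_right (not_lt.2 (hQex _))
        have h0ge := (hγmem ⟨0, hκ⟩).1
        linarith
    · push_neg at hPex
      right
      refine ⟨⟨0, hκ⟩, ⟨N * L - 1, by omega⟩, rfl, rfl, ?_⟩
      have hall : cr - δ < γ ⟨0, hκ⟩ :=
        (hclass _).resolve_left (not_lt.2 (hPex _))
      have hlast := (hγmem ⟨N * L - 1, by omega⟩).2
      linarith
  · -- Case B: the big gap wraps around
    have hclass : ∀ j, γ j < b + δ - Γ ∨ (a - δ < γ j ∧ γ j < b + δ) ∨
        a - δ + Γ < γ j := by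
      intro j
      obtain ⟨i, hi⟩ := hnear j
      obtain ⟨hda, hdb⟩ := hcenter i
      rcases hi with h | h | h <;> rw [abs_lt] at h
      · right; left; exact ⟨by linarith, by linarith⟩
      · left; linarith
      · right; right; linarith
    by_cases hP : ∃ j, γ j < b + δ - Γ
    · by_cases hM : ∃ j, a - δ < γ j ∧ γ j < b + δ
      · -- straddle (u, a - δ)
        have hall : ∀ j, γ j < b + δ - Γ ∨ a - δ < γ j := by
          intro j
          rcases hclass j with h | h | h
          · exact Or.inl h
          · exact Or.inr h.1
          · exact Or.inr (by linarith)
        have hq : ∃ j, a - δ < γ j := ⟨hM.choose, hM.choose_spec.1⟩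
        obtain ⟨j, k, hk, hgt⟩ := straddle hγmono (by linarith) hall hP hq
        exact Or.inl ⟨j, k, hk, by linarith⟩
      · by_cases hQ : ∃ j, a - δ + Γ < γ j
        · -- straddle (u, v)
          push_neg at hM
          have hall : ∀ j, γ j < b + δ - Γ ∨ a - δ + Γ < γ j := by
            intro j
            rcases hclass j with h | h | h
            · exact Or.inl h
            · exact absurd (hM j h.1) (not_le.2 h.2)
            · exact Or.inr h
          obtain ⟨j, k, hk, hgt⟩ := straddle hγmono (by linarith) hall hP hQ
          exact Or.inl ⟨j, k, hk, by linarith⟩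
        · -- all γ below b + δ - Γ
          push_neg at hM hQ
          have hall : ∀ j, γ j < b + δ - Γ := by
            intro j
            rcases hclass j with h | h | h
            · exact h
            · exact absurd (hM j h.1) (not_le.2 h.2)
            · exact absurd h (not_lt.2 (hQ j))
          right
          refine ⟨⟨0, hκ⟩, ⟨N * L - 1, by omega⟩, rfl, rfl, ?_⟩
          have h0 := (hγmem ⟨0, hκ⟩).1
          have hl := hall ⟨N * L - 1, by omega⟩
          linarith
    · by_cases hM : ∃ j, a - δ < γ j ∧ γ j < b + δ
      · by_cases hQ : ∃ j, a - δ + Γ < γ j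
        · -- straddle (b + δ, v)
          have hall : ∀ j, γ j < b + δ ∨ a - δ + Γ < γ j := by
            intro j
            rcases hclass j with h | h | h
            · exact Or.inl (by linarith)
            · exact Or.inl h.2
            · exact Or.inr h
          have hp' : ∃ j, γ j < b + δ := ⟨hM.choose, hM.choose_spec.2⟩
          obtain ⟨j, k, hk, hgt⟩ := straddle hγmono (by linarith) hall hp' hQ
          exact Or.inl ⟨j, k, hk, by linarith⟩
        · -- all γ in the middle band
          push_neg at hP hQ
          have hallM : ∀ j, a - δ < γ j ∧ γ j < b + δ := by
            intro j
            rcases hclass j with h | h | h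
            · exact absurd h (not_lt.2 (hP j))
            · exact h
            · exact absurd h (not_lt.2 (hQ j))
          right
          refine ⟨⟨0, hκ⟩, ⟨N * L - 1, by omega⟩, rfl, rfl, ?_⟩
          have h0 := (hallM ⟨0, hκ⟩).1
          have hl := (hallM ⟨N * L - 1, by omega⟩).2
          linarith
      · by_cases hQ : ∃ j, a - δ + Γ < γ j
        · -- all γ above a - δ + Γ
          push_neg at hP hM
          have hall : ∀ j, a - δ + Γ < γ j := by
            intro j
            rcases hclass j with h | h | h
            · exact absurd h (not_lt.2 (hP j))
            · exact absurd (hM j h.1) (not_le.2 h.2)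
            · exact h
          right
          refine ⟨⟨0, hκ⟩, ⟨N * L - 1, by omega⟩, rfl, rfl, ?_⟩
          have h0 := hall ⟨0, hκ⟩
          have hl := (hγmem ⟨N * L - 1, by omega⟩).2
          linarith
        · -- impossible: γ ⟨0⟩ must be somewhere
          exfalso
          push_neg at hP hM hQ
          rcases hclass ⟨0, hκ⟩ with h | h | h
          · exact absurd h (not_lt.2 (hP _))
          · exact absurd (hM _ h.1) (not_le.2 h.2)
          · exact absurd h (not_lt.2 (hQ _))
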